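/- Let S be a ring and n ≥ 1. Let A be an n×(n+1) matrix over S with columns A_0, A_1, …, A_{n-1}, A_∞ (in this order), and let u ∈ S^{n+1} be a column vector with first entry u_0 = 1 and last entry u_∞ = x such that A·u = 0. Assume that the n×n denominator matrix (A_1 ⋯ A_{n-1} A_∞) is invertible in M_n(S). If x = 0, then the numerator matrix N = (A_0 A_1 ⋯ A_{n-1}) is not full: there exist an n×(n-1) matrix P and an (n-1)×n matrix Q over S with N = PQ. Moreover, if Γ is a group, S is a Γ-graded ring, and A is homogeneous of distribution (ᾱ, β̄) with β_0 = e, then P and Q can be chosen homogeneous with compatible distributions, so that N is not gr-full over S. -/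

import Mathlib

open Matrix

universe u v w

section GradedDefs

variable {Γ : Type u} [Group Γ] {R : Type v} [Ring R]

/-- `A` is a homogeneous matrix of distribution `(α, β)`:
its `(i,j)` entry lies in `𝒜 (α i * (β j)⁻¹)`. -/
def IsHomog (𝒜 : Γ → AddSubgroup R) {m n : ℕ}
    (A : Matrix (Fin m) (Fin n) R) (α : Fin m → Γ) (β : Fin n → Γ) : Prop :=
  ∀ i j, A i j ∈ 𝒜 (α i * (β j)⁻¹)

/-- `A` is a homogeneous matrix for some distribution. -/
def IsHomogSq (𝒜 : Γ → AddSubgroup R) {m n : ℕ}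
    (A : Matrix (Fin m) (Fin n) R) : Prop :=
  ∃ (α : Fin m → Γ) (β : Fin n → Γ), IsHomog 𝒜 A α β

end GradedDefs

/-- Square matrices over `R` of arbitrary finite size. -/
abbrev SqMat (R : Type v) : Type v := Σ n : ℕ, Matrix (Fin n) (Fin n) R

section GradedDefs

variable {Γ : Type u} [Group Γ] {R : Type v} [Ring R]

/-- Diagonal sum `A ⊕ B` of two (rectangular) matrices. -/
def diagSum {m n m' n' : ℕ} (A : Matrix (Fin m) (Fin n) R)
    (B : Matrix (Fin m') (Fin n') R) : Matrix (Fin (m + m')) (Fin (n + n')) R :=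
  Matrix.reindex finSumFinEquiv finSumFinEquiv (Matrix.fromBlocks A 0 0 B)

/-- Block lower triangular matrix `[[A, 0], [C, B]]`. -/
def lowerBlockSum {n m : ℕ} (A : Matrix (Fin n) (Fin n) R) (B : Matrix (Fin m) (Fin m) R)
    (C : Matrix (Fin m) (Fin n) R) : Matrix (Fin (n + m)) (Fin (n + m)) R :=
  Matrix.reindex finSumFinEquiv finSumFinEquiv (Matrix.fromBlocks A 0 C B)

/-- Block upper triangular matrix `[[A, C], [0, B]]` with rectangular blocks. -/
def upperBlockSum {m n m' n' : ℕ} (A : Matrix (Fin m) (Fin n) R)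
    (B : Matrix (Fin m') (Fin n') R) (C : Matrix (Fin m) (Fin n') R) :
    Matrix (Fin (m + m')) (Fin (n + n')) R :=
  Matrix.reindex finSumFinEquiv finSumFinEquiv (Matrix.fromBlocks A C 0 B)

/-- `C` is the determinantal sum of `A` and `B` with respect to some column or row:
`A` and `B` agree away from that column (row) and the distinguished column (row) of `C`
is the sum of the corresponding columns (rows) of `A` and `B`. -/
def IsDetSum {n : ℕ} (A B C : Matrix (Fin n) (Fin n) R) : Prop :=
  (∃ c : Fin n, (∀ i j, j ≠ c → A i j = B i j) ∧
      ∀ i j, C i j = if j = c then A i j + B i j else A i j) ∨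
  (∃ r : Fin n, (∀ i j, i ≠ r → A i j = B i j) ∧
      ∀ i j, C i j = if i = r then A i j + B i j else A i j)

/-- `C` is the determinantal sum of the homogeneous matrices `A` and `B`
(which have a common distribution). -/
def GrDetSum (𝒜 : Γ → AddSubgroup R) {n : ℕ} (A B C : Matrix (Fin n) (Fin n) R) : Prop :=
  (∃ α β : Fin n → Γ, IsHomog 𝒜 A α β ∧ IsHomog 𝒜 B α β) ∧ IsDetSum A B C

/-- A square homogeneous matrix `A` is gr-full if whenever `A = P * Q` with `P`
homogeneous of distribution `(α, lam)` and `Q` homogeneous of distribution `(lam, β)`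
where `lam` has length `r`, then `r ≥ n`. -/
def IsGrFull (𝒜 : Γ → AddSubgroup R) {n : ℕ} (A : Matrix (Fin n) (Fin n) R) : Prop :=
  ∀ (r : ℕ) (P : Matrix (Fin n) (Fin r) R) (Q : Matrix (Fin r) (Fin n) R)
    (α : Fin n → Γ) (lam : Fin r → Γ) (β : Fin n → Γ),
    IsHomog 𝒜 P α lam → IsHomog 𝒜 Q lam β → A = P * Q → n ≤ r

/-- gr-prime matrix ideal: a set of square homogeneous matrices satisfying (PM1)–(PM6). -/
structure IsGrPrimeMatrixIdeal (𝒜 : Γ → AddSubgroup R) (P : Set (SqMat R)) : Prop where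
  subset_homog : ∀ p ∈ P, IsHomogSq 𝒜 p.2
  pm1 : ∀ {n : ℕ} (A : Matrix (Fin n) (Fin n) R),
    IsHomogSq 𝒜 A → ¬ IsGrFull 𝒜 A → (⟨n, A⟩ : SqMat R) ∈ P
  pm2 : ∀ {n : ℕ} (A B C : Matrix (Fin n) (Fin n) R),
    (⟨n, A⟩ : SqMat R) ∈ P → (⟨n, B⟩ : SqMat R) ∈ P → GrDetSum 𝒜 A B C →
    (⟨n, C⟩ : SqMat R) ∈ P
  pm3 : ∀ {m n : ℕ} (A : Matrix (Fin m) (Fin m) R) (B : Matrix (Fin n) (Fin n) R),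
    (⟨m, A⟩ : SqMat R) ∈ P → IsHomogSq 𝒜 B → (⟨m + n, diagSum A B⟩ : SqMat R) ∈ P
  pm4 : ∀ {m n : ℕ} (A : Matrix (Fin m) (Fin m) R) (B : Matrix (Fin n) (Fin n) R),
    IsHomogSq 𝒜 A → IsHomogSq 𝒜 B → (⟨m + n, diagSum A B⟩ : SqMat R) ∈ P →
    (⟨m, A⟩ : SqMat R) ∈ P ∨ (⟨n, B⟩ : SqMat R) ∈ P
  pm5 : (⟨1, (1 : Matrix (Fin 1) (Fin 1) R)⟩ : SqMat R) ∉ P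
  pm6 : ∀ {n : ℕ} (A : Matrix (Fin n) (Fin n) R) (e f : Equiv.Perm (Fin n)),
    (⟨n, A⟩ : SqMat R) ∈ P → (⟨n, A.submatrix ⇑e ⇑f⟩ : SqMat R) ∈ P

/-- gr-matrix ideal: a set of square homogeneous matrices satisfying (I1)–(I5). -/
structure IsGrMatrixIdeal (𝒜 : Γ → AddSubgroup R) (I : Set (SqMat R)) : Prop where
  subset_homog : ∀ p ∈ I, IsHomogSq 𝒜 p.2
  i1 : ∀ {n : ℕ} (A : Matrix (Fin n) (Fin n) R),
    IsHomogSq 𝒜 A → ¬ IsGrFull 𝒜 A → (⟨n, A⟩ : SqMat R) ∈ I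
  i2 : ∀ {n : ℕ} (A B C : Matrix (Fin n) (Fin n) R),
    (⟨n, A⟩ : SqMat R) ∈ I → (⟨n, B⟩ : SqMat R) ∈ I → GrDetSum 𝒜 A B C →
    (⟨n, C⟩ : SqMat R) ∈ I
  i3 : ∀ {m n : ℕ} (A : Matrix (Fin m) (Fin m) R) (B : Matrix (Fin n) (Fin n) R),
    (⟨m, A⟩ : SqMat R) ∈ I → IsHomogSq 𝒜 B → (⟨m + n, diagSum A B⟩ : SqMat R) ∈ I
  i4 : ∀ {n : ℕ} (A : Matrix (Fin n) (Fin n) R) (e f : Equiv.Perm (Fin n)),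
    (⟨n, A⟩ : SqMat R) ∈ I → (⟨n, A.submatrix ⇑e ⇑f⟩ : SqMat R) ∈ I
  i5 : ∀ {n : ℕ} (A : Matrix (Fin n) (Fin n) R),
    (⟨n + 1, diagSum A (1 : Matrix (Fin 1) (Fin 1) R)⟩ : SqMat R) ∈ I →
    (⟨n, A⟩ : SqMat R) ∈ I

/-- The diagonal sum of `r` copies of `A`. -/
def diagIter {n : ℕ} (A : Matrix (Fin n) (Fin n) R) :
    (r : ℕ) → Matrix (Fin (n * r)) (Fin (n * r)) R
  | 0 => 0
  | r + 1 => diagSum (diagIter A r) A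

/-- Iterated determinantal sums (with arbitrary bracketing) of elements of `W`. -/
inductive IsDetSumOf (𝒜 : Γ → AddSubgroup R) (W : Set (SqMat R)) : SqMat R → Prop
  | base (p : SqMat R) (hp : p ∈ W) : IsDetSumOf 𝒜 W p
  | step {n : ℕ} (A B C : Matrix (Fin n) (Fin n) R)
      (hA : IsDetSumOf 𝒜 W ⟨n, A⟩) (hB : IsDetSumOf 𝒜 W ⟨n, B⟩)
      (h : GrDetSum 𝒜 A B C) : IsDetSumOf 𝒜 W ⟨n, C⟩

/-- The homogeneous rational closure of degree `γ`: entries `(j,i)` of inverses of matrices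
`A^f` with `A ∈ Sig` homogeneous of distribution `(α, β)` and `β j * (α i)⁻¹ = γ`. -/
def RatCl (𝒜 : Γ → AddSubgroup R) {S : Type w} [Ring S] (Sig : Set (SqMat R)) (f : R →+* S)
    (γ : Γ) : Set S :=
  {x | ∃ (n : ℕ) (A : Matrix (Fin n) (Fin n) R) (α β : Fin n → Γ) (i j : Fin n)
        (B : Matrix (Fin n) (Fin n) S),
      (⟨n, A⟩ : SqMat R) ∈ Sig ∧ IsHomog 𝒜 A α β ∧ β j * (α i)⁻¹ = γ ∧
      (A.map ⇑f) * B = 1 ∧ B * (A.map ⇑f) = 1 ∧ B j i = x}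

/-- gr-lower semimultiplicative set of square homogeneous matrices. -/
def IsGrLowerSemimult (𝒜 : Γ → AddSubgroup R) (Sig : Set (SqMat R)) : Prop :=
  ((⟨1, (1 : Matrix (Fin 1) (Fin 1) R)⟩ : SqMat R) ∈ Sig) ∧
  ∀ {n m : ℕ} (A : Matrix (Fin n) (Fin n) R) (B : Matrix (Fin m) (Fin m) R)
    (α β : Fin n → Γ) (α' β' : Fin m → Γ) (C : Matrix (Fin m) (Fin n) R),
    (⟨n, A⟩ : SqMat R) ∈ Sig → (⟨m, B⟩ : SqMat R) ∈ Sig →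
    IsHomog 𝒜 A α β → IsHomog 𝒜 B α' β' → IsHomog 𝒜 C α' β →
    (⟨n + m, lowerBlockSum A B C⟩ : SqMat R) ∈ Sig

end GradedDefs

/-- A homomorphism of `Γ`-graded rings from `(R, 𝒜)` to a `Γ`-graded division ring. -/
structure GrDivRingHom (Γ : Type u) [Group Γ] [DecidableEq Γ] (R : Type v) [Ring R]
    (𝒜 : Γ → AddSubgroup R) where
  K : Type (max u v)
  [ringK : Ring K]
  [nontrivialK : Nontrivial K]
  grading : Γ → AddSubgroup K
  internal : DirectSum.IsInternal grading
  one_mem : (1 : K) ∈ grading 1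
  mul_mem : ∀ {γ δ : Γ} {x y : K}, x ∈ grading γ → y ∈ grading δ → x * y ∈ grading (γ * δ)
  isUnit_of_ne : ∀ {γ : Γ} {x : K}, x ∈ grading γ → x ≠ 0 → IsUnit x
  φ : R →+* K
  map_mem : ∀ {γ : Γ} {r : R}, r ∈ 𝒜 γ → φ r ∈ grading γ

attribute [instance] GrDivRingHom.ringK GrDivRingHom.nontrivialK


section GrProj

variable {Γ : Type*} [Group Γ] [DecidableEq Γ] {S : Type*} [Ring S]
variable (𝒜 : Γ → AddSubgroup S)

/-- The projection onto the degree-`γ` component of an internally graded ring. -/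
noncomputable def grProj (internal : DirectSum.IsInternal 𝒜) (γ : Γ) : S →+ S where
  toFun x := ((AddEquiv.ofBijective (DirectSum.coeAddMonoidHom 𝒜) internal).symm x γ : S)
  map_zero' := by simp
  map_add' x y := by simp [DirectSum.add_apply]

theorem grProj_mem (internal : DirectSum.IsInternal 𝒜) (γ : Γ) (x : S) :
    grProj 𝒜 internal γ x ∈ 𝒜 γ :=
  ((AddEquiv.ofBijective (DirectSum.coeAddMonoidHom 𝒜) internal).symm x γ).2

theorem grProj_of_mem_same (internal : DirectSum.IsInternal 𝒜) {γ : Γ} {x : S}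
    (hx : x ∈ 𝒜 γ) : grProj 𝒜 internal γ x = x := by
  have h : (AddEquiv.ofBijective (DirectSum.coeAddMonoidHom 𝒜) internal).symm x
      = DirectSum.of (fun γ => 𝒜 γ) γ ⟨x, hx⟩ := by
    rw [AddEquiv.symm_apply_eq]
    exact (DirectSum.coeAddMonoidHom_of 𝒜 γ ⟨x, hx⟩).symm
  show ((AddEquiv.ofBijective (DirectSum.coeAddMonoidHom 𝒜) internal).symm x γ : S) = x
  rw [h, DirectSum.of_eq_same]

theorem grProj_of_mem_ne (internal : DirectSum.IsInternal 𝒜) {γ δ : Γ} {x : S}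
    (hx : x ∈ 𝒜 δ) (hne : δ ≠ γ) : grProj 𝒜 internal γ x = 0 := by
  have h : (AddEquiv.ofBijective (DirectSum.coeAddMonoidHom 𝒜) internal).symm x
      = DirectSum.of (fun γ => 𝒜 γ) δ ⟨x, hx⟩ := by
    rw [AddEquiv.symm_apply_eq]
    exact (DirectSum.coeAddMonoidHom_of 𝒜 δ ⟨x, hx⟩).symm
  show ((AddEquiv.ofBijective (DirectSum.coeAddMonoidHom 𝒜) internal).symm x γ : S) = 0
  rw [h, DirectSum.of_eq_of_ne _ _ _ hne.symm]
  rfl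

theorem grProj_mul_left (internal : DirectSum.IsInternal 𝒜)
    (hmul : ∀ {γ δ : Γ} {a b : S}, a ∈ 𝒜 γ → b ∈ 𝒜 δ → a * b ∈ 𝒜 (γ * δ))
    {δ : Γ} {a : S} (ha : a ∈ 𝒜 δ) (γ : Γ) (x : S) :
    grProj 𝒜 internal (δ * γ) (a * x) = a * grProj 𝒜 internal γ x := by
  obtain ⟨y, rfl⟩ := internal.surjective x
  induction y using DirectSum.induction_on with
  | zero => simp
  | of γ' z =>
      rw [DirectSum.coeAddMonoidHom_of]
      rcases eq_or_ne γ' γ with rfl | hne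
      · rw [grProj_of_mem_same 𝒜 internal z.2,
          grProj_of_mem_same 𝒜 internal (hmul ha z.2)]
      · rw [grProj_of_mem_ne 𝒜 internal z.2 hne, mul_zero,
          grProj_of_mem_ne 𝒜 internal (hmul ha z.2)
            (fun h => hne (mul_left_cancel h))]
  | add y₁ y₂ h₁ h₂ =>
      simp only [map_add, mul_add, h₁, h₂]

end GrProj

open Matrix in
theorem factor_eq {S : Type*} [Ring S] {m : ℕ}
    (A : Matrix (Fin (m + 1)) (Fin (m + 2)) S) (w : Fin m → S)
    (h : ∀ i, A i 0 = -∑ k : Fin m, A i (k.succ.castSucc) * w k) :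
    A.submatrix id Fin.castSucc =
      (Matrix.of fun i (k : Fin m) => A i (k.succ.castSucc)) *
      (Matrix.of fun (k : Fin m) (j : Fin (m + 1)) =>
        if j = 0 then -w k else if j = k.succ then 1 else 0) := by
  ext i j
  simp only [Matrix.mul_apply, Matrix.submatrix_apply, id, Matrix.of_apply]
  rcases Fin.eq_zero_or_eq_succ j with rfl | ⟨t, rfl⟩
  · rw [Fin.castSucc_zero, h i, ← Finset.sum_neg_distrib]
    exact Finset.sum_congr rfl fun k _ => by rw [if_pos rfl, mul_neg]
  · rw [Finset.sum_eq_single t]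
    · simp [Fin.succ_ne_zero]
    · intro k _ hk
      rw [if_neg (Fin.succ_ne_zero t), if_neg (fun hh => hk (Fin.succ_injective _ hh.symm)), mul_zero]
    · intro hh; exact absurd (Finset.mem_univ t) hh

/-- **Cramer's rule, part (3).** Let `S` be a ring, `n ≥ 1`,
`A` an `n × (n+1)` matrix over `S`, and `u ∈ S^{n+1}` with `u 0 = 1`,
last entry `x = 0` and `A · u = 0`; assume the denominator (columns `1, …, n`)
is invertible.  Then the numerator `N` (columns `0, …, n-1`) is not full:
`N = P * Q` with `P` of size `n × (n-1)` and `Q` of size `(n-1) × n`.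
Moreover, if `Γ` is a group, `S` is a `Γ`-graded ring and `A` is homogeneous
of distribution `(α, β)` with `β 0 = 1`, then `P` and `Q` may be chosen
homogeneous with compatible distributions, so `N` is not gr-full over `S`. -/
theorem cramer_rule_numerator_not_full
    {S : Type v} [Ring S] {n : ℕ} (hn : 0 < n)
    (A : Matrix (Fin n) (Fin (n + 1)) S) (u : Fin (n + 1) → S)
    (hu0 : u 0 = 1) (huLast : u (Fin.last n) = 0)
    (hAu : A.mulVec u = 0)
    (hden : IsUnit (A.submatrix id Fin.succ)) :
    (∃ (P : Matrix (Fin n) (Fin (n - 1)) S) (Q : Matrix (Fin (n - 1)) (Fin n) S),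
        A.submatrix id Fin.castSucc = P * Q) ∧
    (∀ (Γ : Type u) [Group Γ] [DecidableEq Γ] (𝒜 : Γ → AddSubgroup S),
        DirectSum.IsInternal 𝒜 → (1 : S) ∈ 𝒜 1 →
        (∀ {γ δ : Γ} {a b : S}, a ∈ 𝒜 γ → b ∈ 𝒜 δ → a * b ∈ 𝒜 (γ * δ)) →
        ∀ (α : Fin n → Γ) (β : Fin (n + 1) → Γ),
          IsHomog 𝒜 A α β → β 0 = 1 →
          ∃ (lam : Fin (n - 1) → Γ) (P : Matrix (Fin n) (Fin (n - 1)) S)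
            (Q : Matrix (Fin (n - 1)) (Fin n) S),
            IsHomog 𝒜 P α lam ∧ IsHomog 𝒜 Q lam (β ∘ Fin.castSucc) ∧
            A.submatrix id Fin.castSucc = P * Q ∧ ¬ IsGrFull 𝒜 (A.submatrix id Fin.castSucc)) := by
  
  obtain ⟨m, rfl⟩ := Nat.exists_eq_succ_of_ne_zero hn.ne'
  have key : ∀ i, A i 0 + ∑ k : Fin m, A i (k.succ.castSucc) * u (k.succ.castSucc) = 0 := by
    intro i
    have h0 : A.mulVec u i = 0 := by rw [hAu]; rfl
    rw [Matrix.mulVec, dotProduct, Fin.sum_univ_succ, Fin.sum_univ_castSucc] at h0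
    rw [hu0, mul_one, Fin.succ_last, huLast, mul_zero, add_zero] at h0
    simpa only [Fin.succ_castSucc] using h0
  have hfact : ∀ w : Fin m → S, (∀ i, A i 0 = -∑ k : Fin m, A i (k.succ.castSucc) * w k) →
      A.submatrix id Fin.castSucc =
        (Matrix.of fun i (k : Fin m) => A i (k.succ.castSucc)) *
        (Matrix.of fun (k : Fin m) (j : Fin (m + 1)) =>
          if j = 0 then -w k else if j = k.succ then 1 else 0) :=
    fun w h => factor_eq A w h
  constructor
  · exact ⟨_, _, hfact (fun k => u (k.succ.castSucc))
      (fun i => eq_neg_of_add_eq_zero_left (key i))⟩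
  · intro Γ _ _ 𝒜 internal h1 hmul α β hA hβ0
    set lam : Fin m → Γ := fun k => β (k.succ.castSucc) with hlam
    set w : Fin m → S := fun k => grProj 𝒜 internal (lam k) (u (k.succ.castSucc)) with hw
    have hmem0 : ∀ i, A i 0 ∈ 𝒜 (α i) := by
      intro i; have := hA i 0; rwa [hβ0, inv_one, mul_one] at this
    have h' : ∀ i, A i 0 = -∑ k : Fin m, A i (k.succ.castSucc) * w k := by
      intro i
      have e1 : A i 0 = -∑ k : Fin m, A i (k.succ.castSucc) * u (k.succ.castSucc) :=
        eq_neg_of_add_eq_zero_left (key i)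
      have e2 := congrArg (grProj 𝒜 internal (α i)) e1
      rw [grProj_of_mem_same 𝒜 internal (hmem0 i), map_neg, map_sum] at e2
      rw [e2]
      congr 1
      refine Finset.sum_congr rfl fun k _ => ?_
      have h3 := grProj_mul_left 𝒜 internal hmul (hA i (k.succ.castSucc))
        (β (k.succ.castSucc)) (u (k.succ.castSucc))
      rwa [inv_mul_cancel_right] at h3
    set P : Matrix (Fin (m + 1)) (Fin m) S :=
      Matrix.of fun i k => A i (k.succ.castSucc) with hPdef
    set Q : Matrix (Fin m) (Fin (m + 1)) S :=
      Matrix.of fun k j => if j = 0 then -w k else if j = k.succ then 1 else 0 with hQdef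
    have hP : IsHomog 𝒜 P α lam := fun i k => hA i (k.succ.castSucc)
    have hQ : IsHomog 𝒜 Q lam (β ∘ Fin.castSucc) := by
      intro k j
      simp only [hQdef, Matrix.of_apply]
      rcases Fin.eq_zero_or_eq_succ j with rfl | ⟨t, rfl⟩
      · rw [if_pos rfl]
        have hb : (β ∘ Fin.castSucc) (0 : Fin (m + 1)) = 1 := by
          simp only [Function.comp_apply, Fin.castSucc_zero, hβ0]
        rw [hb, inv_one, mul_one]
        exact neg_mem (grProj_mem 𝒜 internal _ _)
      · rw [if_neg (Fin.succ_ne_zero t)]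
        by_cases hk : t.succ = k.succ
        · obtain rfl : t = k := Fin.succ_injective _ hk
          rw [if_pos rfl]
          have hb : (β ∘ Fin.castSucc) t.succ = lam t := rfl
          rw [hb, mul_inv_cancel]
          exact h1
        · rw [if_neg hk]
          exact zero_mem _
    have hPQ : A.submatrix id Fin.castSucc = P * Q := hfact w h'
    refine ⟨lam, P, Q, hP, hQ, hPQ, fun hfull => ?_⟩
    have := hfull m P Q α lam (β ∘ Fin.castSucc) hP hQ hPQ
    omega
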